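/- Let G=(V,E) be a connected simple graph and let M ⊆ V be a well-connected set of G. For any v ∈ M, if |M| > |N(v)| + 1, where N(v) denotes the set of neighbors of v in G, then at least one neighbor of v does not belong to M, i.e., N(v) ⊄ M. -/
import Mathlib


/-- A set `M` of vertices of `G` is *well-connected* if (i) any two distinct
vertices of `M` are joined by a path in `G` avoiding all other vertices of `M`,
and (ii) the subgraph induced by the complement of `M` is connected
(the empty induced subgraph being regarded as connected). -/
def IsWCS {V : Type*} (G : SimpleGraph V) (M : Set V) : Prop :=
  (∀ u ∈ M, ∀ v ∈ M, u ≠ v →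
    ∃ p : G.Walk u v, ∀ w ∈ p.support, w ∈ M → w = u ∨ w = v) ∧
  (G.induce Mᶜ).Preconnected

/-- If `M` is a well-connected set of a connected graph `G` and `v ∈ M` satisfies
`|M| > |N(v)| + 1`, then at least one neighbor of `v` lies outside `M`. -/
theorem wcs_orphan_neighbor {V : Type*} [Fintype V] (G : SimpleGraph V)
    [DecidableRel G.Adj] (hG : G.Connected) (M : Set V) (hM : IsWCS G M)
    (v : V) (hv : v ∈ M) (hcard : (G.neighborFinset v).card + 1 < Nat.card M) :
    ¬ G.neighborSet v ⊆ M := by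
  intro hsub
  -- Every element of M is v or a neighbor of v
  have key : M ⊆ insert v (G.neighborSet v) := by
    intro u hu
    by_cases huv : u = v
    · exact huv ▸ Set.mem_insert _ _
    · obtain ⟨p, hp⟩ := hM.1 v hv u hu (Ne.symm huv)
      cases p with
      | nil => exact absurd rfl (Ne.symm huv)
      | cons h q =>
        rename_i w
        have hwsup : w ∈ (SimpleGraph.Walk.cons h q).support := by
          simp [SimpleGraph.Walk.support_cons]
        have hwM : w ∈ M := hsub h
        rcases hp w hwsup hwM with h1 | h1
        · exact absurd h1 (G.ne_of_adj h).symm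
        · right; rw [← h1]; exact h
  have h1 : Nat.card M ≤ (G.neighborFinset v).card + 1 := by
    have := Set.ncard_le_ncard key (Set.toFinite _)
    rw [Nat.card_coe_set_eq]
    calc M.ncard ≤ (insert v (G.neighborSet v)).ncard := this
      _ ≤ (G.neighborSet v).ncard + 1 := Set.ncard_insert_le _ _
      _ = (G.neighborFinset v).card + 1 := by
          rw [Set.ncard_eq_toFinset_card', SimpleGraph.neighborFinset_def]
  omega
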